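/- Let σ, δ ∈ (0,1). There exists c > 0 such that for all sufficiently large n the following holds: if R ⊆ {0,1}^n is a set such that for every subset S ⊆ [n] of size ⌈σn⌉, the projection of R onto the coordinates outside S has size at most (1−δ)·2^{n−|S|}, then |R| ≤ n^{−c}·2^n. -/

import Mathlib

open Finset Real

set_option maxHeartbeats 1000000

namespace KKLaux
noncomputable section

variable {n : ℕ}

/-- sign of a boolean as a real -/
def e (b : Bool) : ℝ := cond b (-1) 1

@[simp] lemma e_mul_self (b : Bool) : e b * e b = 1 := by cases b <;> simp [e]

@[simp] lemma e_not (b : Bool) : e (!b) = - e b := by cases b <;> simp [e]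

lemma e_sq (b : Bool) : e b ^ 2 = 1 := by cases b <;> norm_num [e]

lemma one_add_e_mul_e_of_ne {b b' : Bool} (h : b ≠ b') : 1 + e b * e b' = 0 := by
  cases b <;> cases b' <;> simp_all [e]

/-- expectation over the cube -/
def ex (n : ℕ) (f : (Fin n → Bool) → ℝ) : ℝ := (∑ x, f x) / 2 ^ n

def chi (S : Finset (Fin n)) (x : Fin n → Bool) : ℝ := ∏ i ∈ S, e (x i)

/-- Fourier coefficient -/
def fh (n : ℕ) (f : (Fin n → Bool) → ℝ) (S : Finset (Fin n)) : ℝ :=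
  ex n (fun x => f x * chi S x)

def ker (ρ : ℝ) (x y : Fin n → Bool) : ℝ := ∏ i, (1 + ρ * (e (x i) * e (y i)))

/-- noise operator -/
def T (n : ℕ) (ρ : ℝ) (f : (Fin n → Bool) → ℝ) : (Fin n → Bool) → ℝ :=
  fun x => ex n (fun y => f y * ker ρ x y)

lemma ker_eq_sum (ρ : ℝ) (x y : Fin n → Bool) :
    ker ρ x y = ∑ S : Finset (Fin n), ρ ^ S.card * (chi S x * chi S y) := by
  have h1 : ker ρ x y = ∏ i, ((ρ * (e (x i) * e (y i))) + 1) := by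
    rw [ker]; exact Finset.prod_congr rfl fun i _ => by ring
  rw [h1, Finset.prod_add, Finset.powerset_univ]
  refine Finset.sum_congr rfl fun S _ => ?_
  simp only [Finset.prod_const_one, mul_one, Finset.prod_mul_distrib, Finset.prod_const, chi]

lemma sum_chi_mul_chi (x y : Fin n → Bool) :
    ∑ S : Finset (Fin n), chi S x * chi S y = if x = y then (2:ℝ) ^ n else 0 := by
  have h := ker_eq_sum 1 x y
  simp only [one_pow, one_mul] at h
  rw [← h, ker]
  by_cases hxy : x = y
  · subst hxy
    simp [e_mul_self]
    norm_num
  · rw [if_neg hxy]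
    obtain ⟨i, hi⟩ : ∃ i, x i ≠ y i := by
      by_contra hc
      push_neg at hc
      exact hxy (funext hc)
    apply Finset.prod_eq_zero (Finset.mem_univ i)
    simpa using one_add_e_mul_e_of_ne hi

lemma inversion (f : (Fin n → Bool) → ℝ) (x : Fin n → Bool) :
    ∑ S : Finset (Fin n), fh n f S * chi S x = f x := by
  have key : ∑ S : Finset (Fin n), (∑ y, f y * chi S y) * chi S x = f x * 2 ^ n := by
    have h1 : ∀ S : Finset (Fin n), (∑ y, f y * chi S y) * chi S x
        = ∑ y, f y * (chi S y * chi S x) := by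
      intro S; rw [Finset.sum_mul]; exact Finset.sum_congr rfl fun y _ => by ring
    simp only [h1]
    rw [Finset.sum_comm]
    simp only [← Finset.mul_sum, sum_chi_mul_chi]
    simp only [mul_ite, mul_zero]
    rw [Finset.sum_ite_eq' Finset.univ x (fun y => f y * 2 ^ n)]
    simp
  have h2 : ∀ S : Finset (Fin n), fh n f S * chi S x
      = ((∑ y, f y * chi S y) * chi S x) / 2 ^ n := by
    intro S; rw [fh, ex]; ring
  simp only [h2, ← Finset.sum_div, key]
  field_simp

lemma parseval (f g : (Fin n → Bool) → ℝ) :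
    ∑ S : Finset (Fin n), fh n f S * fh n g S = ex n (fun x => f x * g x) := by
  have h1 : ∀ S : Finset (Fin n), fh n f S * fh n g S
      = (∑ y, g y * (fh n f S * chi S y)) / 2 ^ n := by
    intro S
    have hg : fh n g S = (∑ y, g y * chi S y) / 2 ^ n := rfl
    rw [hg, mul_div_assoc' (fh n f S), Finset.mul_sum]
    congr 1
    exact Finset.sum_congr rfl fun y _ => by ring
  simp only [h1, ← Finset.sum_div]
  rw [Finset.sum_comm, ex]
  congr 1
  refine Finset.sum_congr rfl fun y _ => ?_
  rw [← Finset.mul_sum, inversion]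
  ring

variable {n : ℕ}
def flp (i : Fin n) (x : Fin n → Bool) : Fin n → Bool := Function.update x i (!x i)

lemma flp_flp (i : Fin n) (x : Fin n → Bool) : flp i (flp i x) = x := by
  unfold flp
  rw [Function.update_idem, Function.update_self, Bool.not_not, Function.update_eq_self]

lemma flp_invol (i : Fin n) : Function.Involutive (flp i) := flp_flp i

lemma sum_flp (i : Fin n) (F : (Fin n → Bool) → ℝ) : ∑ x, F (flp i x) = ∑ x, F x :=
  Fintype.sum_equiv (flp_invol i).toPerm _ _ (fun x => rfl)

lemma flp_apply_ne (i j : Fin n) (x : Fin n → Bool) (h : j ≠ i) : flp i x j = x j :=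
  Function.update_of_ne h _ _

@[simp] lemma flp_apply_self (i : Fin n) (x : Fin n → Bool) : flp i x i = !x i :=
  Function.update_self _ _ _

lemma chi_flp (i : Fin n) (S : Finset (Fin n)) (x : Fin n → Bool) :
    chi S (flp i x) = (if i ∈ S then (-1:ℝ) else 1) * chi S x := by
  by_cases hi : i ∈ S
  · rw [if_pos hi, chi, chi, ← Finset.mul_prod_erase _ _ hi, ← Finset.mul_prod_erase _ _ hi]
    rw [flp_apply_self, e_not]
    rw [Finset.prod_congr rfl (fun j hj => by
      rw [flp_apply_ne i j x (Finset.ne_of_mem_erase hj)])]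
    ring
  · rw [if_neg hi, one_mul, chi, chi]
    exact Finset.prod_congr rfl (fun j hj => by
      rw [flp_apply_ne i j x (fun hji => hi (hji ▸ hj))])

lemma ortho_sum (S T : Finset (Fin n)) :
    ∑ x, chi S x * chi T x = if S = T then (2:ℝ)^n else 0 := by
  by_cases h : S = T
  · subst h
    rw [if_pos rfl]
    have : ∀ x : Fin n → Bool, chi S x * chi S x = 1 := by
      intro x
      rw [chi, ← Finset.prod_mul_distrib]
      simp
    simp only [this, Finset.sum_const, nsmul_eq_mul, mul_one]
    rw [Finset.card_univ, Fintype.card_fun]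
    simp
  · rw [if_neg h]
    obtain ⟨i, hi⟩ : ∃ i, ((i ∈ S ∧ i ∉ T) ∨ (i ∈ T ∧ i ∉ S)) := by
      by_contra hc
      push_neg at hc
      exact h (Finset.ext fun i => by
        have := hc i
        tauto)
    have hneg : ∀ x, chi S (flp i x) * chi T (flp i x) = -(chi S x * chi T x) := by
      intro x
      rw [chi_flp, chi_flp]
      rcases hi with ⟨h1, h2⟩ | ⟨h1, h2⟩
      · rw [if_pos h1, if_neg h2]; ring
      · rw [if_neg h2, if_pos h1]; ring
    have := sum_flp i (fun x => chi S x * chi T x)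
    simp only [hneg, Finset.sum_neg_distrib] at this
    linarith

lemma T_eq (ρ : ℝ) (f : (Fin n → Bool) → ℝ) (x : Fin n → Bool) :
    T n ρ f x = ∑ S : Finset (Fin n), ρ ^ S.card * fh n f S * chi S x := by
  have h0 : T n ρ f x = (∑ y, f y * ker ρ x y) / 2 ^ n := rfl
  rw [h0]
  have h1 : ∀ y, f y * ker ρ x y
      = ∑ S : Finset (Fin n), ρ ^ S.card * (f y * chi S y) * chi S x := by
    intro y
    rw [ker_eq_sum, Finset.mul_sum]
    exact Finset.sum_congr rfl fun S _ => by ring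
  simp only [h1]
  rw [Finset.sum_comm, Finset.sum_div]
  refine Finset.sum_congr rfl fun S _ => ?_
  have hf : fh n f S = (∑ y, f y * chi S y) / 2 ^ n := rfl
  rw [hf, ← Finset.sum_mul, ← Finset.mul_sum]
  ring

lemma fh_T (ρ : ℝ) (f : (Fin n → Bool) → ℝ) (S : Finset (Fin n)) :
    fh n (T n ρ f) S = ρ ^ S.card * fh n f S := by
  have h0 : fh n (T n ρ f) S = (∑ x, T n ρ f x * chi S x) / 2 ^ n := rfl
  rw [h0]
  simp only [T_eq, Finset.sum_mul]
  rw [Finset.sum_comm]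
  have h1 : ∀ Q : Finset (Fin n),
      ∑ x, ρ ^ Q.card * fh n f Q * chi Q x * chi S x
        = ρ ^ Q.card * fh n f Q * (if Q = S then (2:ℝ)^n else 0) := by
    intro Q
    rw [← ortho_sum, Finset.mul_sum]
    exact Finset.sum_congr rfl fun x _ => by ring
  simp only [h1, mul_ite, mul_zero]
  rw [Finset.sum_ite_eq' Finset.univ S (fun Q => ρ ^ Q.card * fh n f Q * 2 ^ n)]
  simp only [Finset.mem_univ, if_pos]
  field_simp

lemma T_one (f : (Fin n → Bool) → ℝ) (x : Fin n → Bool) : T n 1 f x = f x := by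
  rw [T_eq]
  simp only [one_pow, one_mul]
  exact inversion f x

lemma ex_T_mul_T (a b : ℝ) (f : (Fin n → Bool) → ℝ) :
    ex n (fun x => T n a f x * T n b f x)
      = ∑ S : Finset (Fin n), (a*b) ^ S.card * (fh n f S)^2 := by
  rw [← parseval]
  refine Finset.sum_congr rfl fun S _ => ?_
  rw [fh_T, fh_T]
  ring

lemma ex_mul_T (c : ℝ) (f : (Fin n → Bool) → ℝ) :
    ex n (fun x => f x * T n c f x)
      = ∑ S : Finset (Fin n), c ^ S.card * (fh n f S)^2 := by
  have := ex_T_mul_T 1 c f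
  simp only [one_mul] at this
  rw [← this, ex, ex]
  congr 1
  exact Finset.sum_congr rfl fun x _ => by rw [T_one]

/-! ### linearity and positivity of `ex` -/

lemma ex_add (f g : (Fin n → Bool) → ℝ) :
    ex n (fun x => f x + g x) = ex n f + ex n g := by
  rw [ex, ex, ex, Finset.sum_add_distrib, add_div]

lemma ex_const_mul (c : ℝ) (f : (Fin n → Bool) → ℝ) :
    ex n (fun x => c * f x) = c * ex n f := by
  rw [ex, ex, ← Finset.mul_sum, mul_div_assoc]

lemma ex_nonneg {f : (Fin n → Bool) → ℝ} (hf : ∀ x, 0 ≤ f x) : 0 ≤ ex n f :=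
  div_nonneg (Finset.sum_nonneg fun x _ => hf x) (by positivity)

lemma ex_mono {f g : (Fin n → Bool) → ℝ} (hfg : ∀ x, f x ≤ g x) : ex n f ≤ ex n g := by
  rw [ex, ex]
  gcongr with x hx
  exact hfg x

/-- Cauchy–Schwarz for `ex` -/
lemma ex_cauchy (p q : (Fin n → Bool) → ℝ) :
    ex n (fun x => p x * q x) ≤
      Real.sqrt (ex n (fun x => (p x)^2)) * Real.sqrt (ex n (fun x => (q x)^2)) := by
  rw [← Real.sqrt_mul (ex_nonneg fun x => sq_nonneg _)]
  rcases le_or_gt (ex n (fun x => p x * q x)) 0 with hle | hpos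
  · exact hle.trans (Real.sqrt_nonneg _)
  · rw [Real.le_sqrt' hpos]
    rw [ex, ex, ex, div_pow, div_mul_div_comm, ← pow_add]
    have h2 : ((2:ℝ)^n)^2 = (2:ℝ)^(n+n) := by rw [← pow_mul]; ring_nf
    rw [h2]
    gcongr
    exact Finset.sum_mul_sq_le_sq_mul_sq _ _ _

/-! ### sums over the cube of dimension `n+1` -/

lemma sum_succ (F : (Fin (n+1) → Bool) → ℝ) :
    ∑ x, F x = ∑ x : Fin n → Bool, (F (Fin.cons false x) + F (Fin.cons true x)) := by
  have h1 := Fintype.sum_equiv (Fin.consEquiv (fun _ : Fin (n+1) => Bool))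
    (fun p => F (Fin.cons p.1 p.2)) F (fun p => rfl)
  rw [← h1, Fintype.sum_prod_type, Fintype.sum_bool, Finset.sum_add_distrib, add_comm]

lemma ex_succ (F : (Fin (n+1) → Bool) → ℝ) :
    ex (n+1) F = (ex n (fun x => F (Fin.cons false x)) + ex n (fun x => F (Fin.cons true x))) / 2 := by
  rw [ex, sum_succ, ex, ex, Finset.sum_add_distrib, pow_succ]
  field_simp

lemma ker_succ (ρ : ℝ) (b b' : Bool) (x y : Fin n → Bool) :
    ker ρ (Fin.cons b x) (Fin.cons b' y) = (1 + ρ * (e b * e b')) * ker ρ x y := by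
  rw [ker, Fin.prod_univ_succ, ker]
  simp

lemma T_succ (ρ : ℝ) (f : (Fin (n+1) → Bool) → ℝ) (b : Bool) (x : Fin n → Bool) :
    T (n+1) ρ f (Fin.cons b x)
      = T n ρ (fun y => (f (Fin.cons false y) + f (Fin.cons true y))/2) x
        + ρ * e b * T n ρ (fun y => (f (Fin.cons false y) - f (Fin.cons true y))/2) x := by
  have h0 : T (n+1) ρ f (Fin.cons b x) = (∑ y, f y * ker ρ (Fin.cons b x) y) / 2 ^ (n+1) := rfl
  rw [h0, sum_succ (fun y => f y * ker ρ (Fin.cons b x) y)]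
  have hT : ∀ g : (Fin n → Bool) → ℝ, T n ρ g x = (∑ y, g y * ker ρ x y) / 2 ^ n := fun g => rfl
  rw [hT, hT]
  have hptw : ∀ y : Fin n → Bool,
      f (Fin.cons false y) * ker ρ (Fin.cons b x) (Fin.cons false y)
        + f (Fin.cons true y) * ker ρ (Fin.cons b x) (Fin.cons true y)
      = ((f (Fin.cons false y) + f (Fin.cons true y))/2) * ker ρ x y
        + (ρ * e b) * (((f (Fin.cons false y) - f (Fin.cons true y))/2) * ker ρ x y)
        + ((f (Fin.cons false y) + f (Fin.cons true y))/2) * ker ρ x y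
        + (ρ * e b) * (((f (Fin.cons false y) - f (Fin.cons true y))/2) * ker ρ x y) := by
    intro y
    rw [ker_succ, ker_succ, show e false = (1:ℝ) from rfl, show e true = (-1:ℝ) from rfl]
    ring
  simp only [hptw]
  rw [Finset.sum_add_distrib, Finset.sum_add_distrib, Finset.sum_add_distrib]
  simp only [← Finset.mul_sum]
  rw [pow_succ]
  field_simp
  ring

/-! ### hypercontractivity : `‖T_ρ f‖₄ ≤ ‖f‖₂` for `ρ ≤ 1/3` -/

theorem hc : ∀ (n : ℕ) (ρ : ℝ), 0 ≤ ρ → ρ ≤ 1/3 → ∀ f : (Fin n → Bool) → ℝ,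
    ex n (fun x => (T n ρ f x)^4) ≤ (ex n (fun x => (f x)^2))^2 := by
  intro n
  induction n with
  | zero =>
    intro ρ _ _ f
    have huniq : ∀ y : Fin 0 → Bool, y = default := fun y => Subsingleton.elim _ _
    have huu : (Finset.univ : Finset (Fin 0 → Bool)) = {default} :=
      Finset.eq_singleton_iff_unique_mem.mpr ⟨Finset.mem_univ _, fun y _ => huniq y⟩
    have hex : ∀ F : (Fin 0 → Bool) → ℝ, ex 0 F = F default := by
      intro F
      rw [ex, pow_zero, div_one, huu, Finset.sum_singleton]
    have hT : T 0 ρ f default = f default := by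
      rw [show T 0 ρ f default = ex 0 (fun y => f y * ker ρ default y) from rfl, hex, ker]
      simp
    rw [hex, hex, hT]
    exact le_of_eq (by ring)
  | succ n ih =>
    intro ρ hρ0 hρ3 f
    set g : (Fin n → Bool) → ℝ := fun y => (f (Fin.cons false y) + f (Fin.cons true y))/2 with hg
    set h : (Fin n → Bool) → ℝ := fun y => (f (Fin.cons false y) - f (Fin.cons true y))/2 with hh
    have hb : ∀ x, T (n+1) ρ f (Fin.cons false x) = T n ρ g x + ρ * T n ρ h x := by
      intro x
      rw [T_succ, show e false = (1:ℝ) from rfl]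
      ring
    have hb' : ∀ x, T (n+1) ρ f (Fin.cons true x) = T n ρ g x - ρ * T n ρ h x := by
      intro x
      rw [T_succ, show e true = (-1:ℝ) from rfl]
      ring
    have hsplit : ex (n+1) (fun x => (T (n+1) ρ f x)^4)
        = ex n (fun x => (T n ρ g x)^4)
          + 6*ρ^2 * ex n (fun x => (T n ρ g x)^2 * (T n ρ h x)^2)
          + ρ^4 * ex n (fun x => (T n ρ h x)^4) := by
      rw [ex_succ (fun x => (T (n+1) ρ f x)^4)]
      simp only [hb, hb']
      rw [← ex_add]
      have hptw : ∀ x, (T n ρ g x + ρ * T n ρ h x)^4 + (T n ρ g x - ρ * T n ρ h x)^4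
          = 2*((T n ρ g x)^4) + (2*(6*ρ^2)) * ((T n ρ g x)^2*(T n ρ h x)^2)
            + (2*ρ^4)*((T n ρ h x)^4) := by
        intro x; ring
      rw [show (fun x => (T n ρ g x + ρ * T n ρ h x)^4 + (T n ρ g x - ρ * T n ρ h x)^4)
        = fun x => 2*((T n ρ g x)^4) + ((2*(6*ρ^2)) * ((T n ρ g x)^2*(T n ρ h x)^2)
            + (2*ρ^4)*((T n ρ h x)^4)) from funext fun x => by rw [hptw x]; ring]
      rw [ex_add, ex_add, ex_const_mul, ex_const_mul, ex_const_mul]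
      ring
    rw [hsplit]
    have hA4 := ih ρ hρ0 hρ3 g
    have hB4 := ih ρ hρ0 hρ3 h
    set A := ex n (fun x => (T n ρ g x)^4) with hA
    set B := ex n (fun x => (T n ρ h x)^4) with hB
    have hA0 : 0 ≤ A := ex_nonneg fun x => by positivity
    have hB0 : 0 ≤ B := ex_nonneg fun x => by positivity
    set E := ex n (fun x => (T n ρ g x)^2 * (T n ρ h x)^2) with hE
    have hE0 : 0 ≤ E := ex_nonneg fun x => by positivity
    have hCS : E ≤ Real.sqrt A * Real.sqrt B := by
      have hcs := ex_cauchy (fun x => (T n ρ g x)^2) (fun x => (T n ρ h x)^2)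
      have hq : ∀ a : ℝ, (a^2)^2 = a^4 := fun a => by ring
      simp only [hq] at hcs
      exact hcs
    set a := ex n (fun x => (g x)^2) with ha
    set b := ex n (fun x => (h x)^2) with hbdef
    have ha0 : 0 ≤ a := ex_nonneg fun x => sq_nonneg _
    have hb0 : 0 ≤ b := ex_nonneg fun x => sq_nonneg _
    have hsA : Real.sqrt A ≤ a := by
      calc Real.sqrt A ≤ Real.sqrt (a^2) := Real.sqrt_le_sqrt hA4
      _ = a := Real.sqrt_sq ha0
    have hsB : Real.sqrt B ≤ b := by
      calc Real.sqrt B ≤ Real.sqrt (b^2) := Real.sqrt_le_sqrt hB4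
      _ = b := Real.sqrt_sq hb0
    have hab : a + b = ex (n+1) (fun x => (f x)^2) := by
      rw [ex_succ (fun x => (f x)^2), ha, hbdef, ← ex_add]
      rw [show (fun x => (g x)^2 + (h x)^2)
        = fun x => (1/2) * ((f (Fin.cons false x))^2 + (f (Fin.cons true x))^2) from
        funext fun x => by rw [hg, hh]; ring]
      rw [ex_const_mul, ex_add]
      ring
    rw [← hab]
    have hrA : A = (Real.sqrt A)^2 := (Real.sq_sqrt hA0).symm
    have hrB : B = (Real.sqrt B)^2 := (Real.sq_sqrt hB0).symm
    have hρ2 : ρ^2 ≤ 1/9 := by nlinarith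
    have hρ4 : ρ^4 ≤ 1 := by nlinarith
    have hsqA0 : 0 ≤ Real.sqrt A := Real.sqrt_nonneg _
    have hsqB0 : 0 ≤ Real.sqrt B := Real.sqrt_nonneg _
    have step1 : A + 6*ρ^2*E + ρ^4*B ≤ (Real.sqrt A + Real.sqrt B)^2 := by
      nlinarith [mul_nonneg hsqA0 hsqB0]
    have step2 : (Real.sqrt A + Real.sqrt B)^2 ≤ (a+b)^2 :=
      pow_le_pow_left₀ (add_nonneg hsqA0 hsqB0) (by linarith) 2
    linarith

/-! ### influences and the KKL estimate -/

def Inf (n : ℕ) (i : Fin n) (f : (Fin n → Bool) → ℝ) : ℝ :=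
  ex n (fun x => (f x - f (flp i x))^2)

lemma Inf_nonneg (i : Fin n) (f : (Fin n → Bool) → ℝ) : 0 ≤ Inf n i f :=
  ex_nonneg fun x => sq_nonneg _

lemma fh_comp_flp (i : Fin n) (f : (Fin n → Bool) → ℝ) (S : Finset (Fin n)) :
    fh n (fun x => f (flp i x)) S = (if i ∈ S then (-1:ℝ) else 1) * fh n f S := by
  have h0 : fh n (fun x => f (flp i x)) S = (∑ x, f (flp i x) * chi S x) / 2 ^ n := rfl
  rw [h0]
  have h1 : ∑ x, f (flp i x) * chi S x = ∑ x, f x * chi S (flp i x) := by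
    rw [← sum_flp i (fun y => f y * chi S (flp i y))]
    exact Finset.sum_congr rfl fun x _ => by rw [flp_flp]
  rw [h1]
  have h2 : ∀ x, f x * chi S (flp i x) = (if i ∈ S then (-1:ℝ) else 1) * (f x * chi S x) := by
    intro x; rw [chi_flp]; ring
  simp only [h2]
  rw [← Finset.mul_sum]
  have hfh : fh n f S = (∑ x, f x * chi S x) / 2 ^ n := rfl
  rw [hfh]
  ring

lemma fh_dv (i : Fin n) (f : (Fin n → Bool) → ℝ) (S : Finset (Fin n)) :
    fh n (fun x => (f x - f (flp i x))/2) S = if i ∈ S then fh n f S else 0 := by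
  have h0 : fh n (fun x => (f x - f (flp i x))/2) S
      = (∑ x, ((f x - f (flp i x))/2) * chi S x) / 2 ^ n := rfl
  have h1 : ∀ x, ((f x - f (flp i x))/2) * chi S x
      = (f x * chi S x - f (flp i x) * chi S x)/2 := fun x => by ring
  rw [h0]
  simp only [h1]
  rw [← Finset.sum_div, Finset.sum_sub_distrib]
  have hfh : fh n f S = (∑ x, f x * chi S x) / 2 ^ n := rfl
  have hfh2 : fh n (fun x => f (flp i x)) S = (∑ x, f (flp i x) * chi S x) / 2 ^ n := rfl
  have := fh_comp_flp i f S
  rw [hfh2] at this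
  have e : (∑ x : Fin n → Bool, f x * chi S x - ∑ x : Fin n → Bool, f (flp i x) * chi S x)/2/2^n
      = ((∑ x : Fin n → Bool, f x * chi S x)/2^n
          - (∑ x : Fin n → Bool, f (flp i x) * chi S x)/2^n)/2 := by
    ring
  by_cases hi : i ∈ S
  · rw [if_pos hi] at this
    rw [if_pos hi, e, this, ← hfh]
    ring
  · rw [if_neg hi, one_mul] at this
    rw [if_neg hi, e, this, ← hfh]
    ring

lemma parseval_self (f : (Fin n → Bool) → ℝ) :
    ∑ S : Finset (Fin n), (fh n f S)^2 = ex n (fun x => (f x)^2) := by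
  have := parseval f f
  simp only [← sq] at this
  exact this

/-- The hypercontractive estimate for a single coordinate. -/
lemma kkl_step (i : Fin n) (f : (Fin n → Bool) → ℝ) (hf : ∀ x, f x = 0 ∨ f x = 1) :
    ∑ S : Finset (Fin n), (if i ∈ S then ((1:ℝ)/81)^S.card * (fh n f S)^2 else 0)
      ≤ Inf n i f * Real.sqrt (Real.sqrt (Inf n i f)) / 4 := by
  set g : (Fin n → Bool) → ℝ := fun x => (f x - f (flp i x))/2 with hg
  set p : (Fin n → Bool) → ℝ := fun x => (f x - f (flp i x))^2 with hp
  set μ : ℝ := Inf n i f with hμ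
  have hμex : μ = ex n p := rfl
  have hμ0 : 0 ≤ μ := Inf_nonneg i f
  -- pointwise facts
  have habs : ∀ x, |g x| = p x / 2 := by
    intro x
    rcases hf x with h1 | h1 <;> rcases hf (flp i x) with h2 | h2 <;>
      rw [hg, hp] <;> simp only [h1, h2] <;> norm_num
  have hpsq : ∀ x, (p x)^2 = p x := by
    intro x
    rcases hf x with h1 | h1 <;> rcases hf (flp i x) with h2 | h2 <;>
      rw [hp] <;> simp only [h1, h2] <;> norm_num
  have hgsq : ∀ x, (g x)^2 = p x / 4 := by
    intro x
    rcases hf x with h1 | h1 <;> rcases hf (flp i x) with h2 | h2 <;>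
      rw [hg, hp] <;> simp only [h1, h2] <;> norm_num
  have hp0 : ∀ x, 0 ≤ p x := fun x => sq_nonneg _
  -- the LHS as an inner product with the noise operator
  have hlhs : ∑ S : Finset (Fin n), (if i ∈ S then ((1:ℝ)/81)^S.card * (fh n f S)^2 else 0)
      = ex n (fun x => g x * T n (1/81) g x) := by
    rw [ex_mul_T]
    refine Finset.sum_congr rfl fun S _ => ?_
    rw [hg, fh_dv]
    by_cases hi : i ∈ S
    · rw [if_pos hi, if_pos hi]
    · rw [if_neg hi, if_neg hi]
      norm_num
  rw [hlhs]
  set Tg : (Fin n → Bool) → ℝ := T n (1/81) g with hTg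
  -- ex g² = μ/4
  have hexg : ex n (fun x => (g x)^2) = μ / 4 := by
    rw [hμex]
    rw [show (fun x => (g x)^2) = fun x => (1/4) * p x from funext fun x => by
      rw [hgsq x]; ring]
    rw [ex_const_mul]
    ring
  -- hypercontractivity
  have hhc : ex n (fun x => (Tg x)^4) ≤ (μ/4)^2 := by
    rw [← hexg]
    exact hc n (1/81) (by norm_num) (by norm_num) g
  have hTg4 : 0 ≤ ex n (fun x => (Tg x)^4) := ex_nonneg fun x => by positivity
  -- Z bound
  have hZ : ex n (fun x => p x * (Tg x)^2) ≤ Real.sqrt μ * (μ/4) := by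
    have hcs := ex_cauchy p (fun x => (Tg x)^2)
    rw [show (fun x => (p x)^2) = p from funext fun x => hpsq x] at hcs
    rw [show (fun x => ((Tg x)^2)^2) = fun x => (Tg x)^4 from funext fun x => by ring] at hcs
    rw [← hμex] at hcs
    refine hcs.trans ?_
    have : Real.sqrt (ex n (fun x => (Tg x)^4)) ≤ μ/4 := by
      calc Real.sqrt (ex n (fun x => (Tg x)^4)) ≤ Real.sqrt ((μ/4)^2) := Real.sqrt_le_sqrt hhc
      _ = μ/4 := Real.sqrt_sq (by linarith)
    exact mul_le_mul_of_nonneg_left this (Real.sqrt_nonneg _)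
  have hZ0 : 0 ≤ ex n (fun x => p x * (Tg x)^2) := ex_nonneg fun x => by
    exact mul_nonneg (hp0 x) (sq_nonneg _)
  -- Y bound
  have hY : ex n (fun x => p x * |Tg x|) ≤ Real.sqrt μ * Real.sqrt (ex n (fun x => p x * (Tg x)^2)) := by
    have hcs := ex_cauchy p (fun x => p x * |Tg x|)
    have hptq : ∀ x : Fin n → Bool, p x * (p x * |Tg x|) = p x * |Tg x| := by
      intro x
      rcases hf x with h1 | h1 <;> rcases hf (flp i x) with h2 | h2 <;>
        rw [hp] <;> simp only [h1, h2] <;> norm_num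
    have hsq2 : ∀ x : Fin n → Bool, (p x * |Tg x|)^2 = p x * (Tg x)^2 := by
      intro x
      rw [mul_pow, sq_abs, hpsq x]
    rw [show (fun x => p x * (p x * |Tg x|)) = fun x => p x * |Tg x| from
      funext fun x => hptq x] at hcs
    rw [show (fun x => (p x)^2) = p from funext fun x => hpsq x] at hcs
    rw [show (fun x => (p x * |Tg x|)^2) = fun x => p x * (Tg x)^2 from
      funext fun x => hsq2 x] at hcs
    rw [← hμex] at hcs
    exact hcs
  -- assemble
  have hmain : ex n (fun x => g x * Tg x) ≤ (1/2) * ex n (fun x => p x * |Tg x|) := by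
    rw [← ex_const_mul]
    refine ex_mono fun x => ?_
    calc g x * Tg x ≤ |g x * Tg x| := le_abs_self _
    _ = |g x| * |Tg x| := abs_mul _ _
    _ = (p x/2) * |Tg x| := by rw [habs]
    _ = 1/2 * (p x * |Tg x|) := by ring
  have hsqrtZ : Real.sqrt (ex n (fun x => p x * (Tg x)^2))
      ≤ Real.sqrt (Real.sqrt μ) * Real.sqrt μ / 2 := by
    calc Real.sqrt (ex n (fun x => p x * (Tg x)^2)) ≤ Real.sqrt (Real.sqrt μ * (μ/4)) :=
      Real.sqrt_le_sqrt hZ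
    _ = Real.sqrt (Real.sqrt μ) * Real.sqrt (μ/4) := Real.sqrt_mul (Real.sqrt_nonneg _) _
    _ = Real.sqrt (Real.sqrt μ) * (Real.sqrt μ / 2) := by
        congr 1
        rw [show (μ/4 : ℝ) = μ * (1/2)^2 by ring, Real.sqrt_mul hμ0,
          Real.sqrt_sq (by norm_num : (0:ℝ) ≤ 1/2)]
        ring
    _ = Real.sqrt (Real.sqrt μ) * Real.sqrt μ / 2 := by ring
  calc ex n (fun x => g x * Tg x) ≤ (1/2) * ex n (fun x => p x * |Tg x|) := hmain
  _ ≤ (1/2) * (Real.sqrt μ * Real.sqrt (ex n (fun x => p x * (Tg x)^2))) := by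
      have h0 : (0:ℝ) ≤ 1/2 := by norm_num
      exact mul_le_mul_of_nonneg_left hY h0
  _ ≤ (1/2) * (Real.sqrt μ * (Real.sqrt (Real.sqrt μ) * Real.sqrt μ / 2)) := by
      refine mul_le_mul_of_nonneg_left ?_ (by norm_num)
      exact mul_le_mul_of_nonneg_left hsqrtZ (Real.sqrt_nonneg _)
  _ = (Real.sqrt μ * Real.sqrt μ) * Real.sqrt (Real.sqrt μ) / 4 := by ring
  _ = μ * Real.sqrt (Real.sqrt μ) / 4 := by rw [Real.mul_self_sqrt hμ0]

lemma ex_const (c : ℝ) : ex n (fun _ => c) = c := by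
  rw [ex, Finset.sum_const, Finset.card_univ, Fintype.card_fun]
  have h2n : ((2:ℝ))^n ≠ 0 := by positivity
  simp only [nsmul_eq_mul, Fintype.card_bool, Fintype.card_fin]
  push_cast
  field_simp

/-- KKL for a fixed dimension, given the numeric conditions on `d`. -/
lemma kkl_fixed (n : ℕ) (hn2 : 2 ≤ n)
    (d : ℕ) (hd1 : 1 ≤ d) (hdlog : Real.log n / 44 ≤ (d:ℝ))
    (hE1 : Real.log n / (88*n) ≤ (((1:ℝ)/81)^d / (d:ℝ))^4)
    (f : (Fin n → Bool) → ℝ) (hf : ∀ x, f x = 0 ∨ f x = 1) :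
    ∃ i : Fin n, ex n f * (1 - ex n f) * Real.log n / (22*(n:ℝ)) ≤ Inf n i f := by
  have hn0 : (0:ℝ) < (n:ℝ) := by
    have : (0:ℕ) < n := by omega
    exact_mod_cast this
  have hlog0 : (0:ℝ) ≤ Real.log n := Real.log_nonneg (by exact_mod_cast Nat.one_le_iff_ne_zero.mpr (by omega))
  have hd0 : (0:ℝ) < (d:ℝ) := by exact_mod_cast Nat.lt_of_lt_of_le Nat.zero_lt_one hd1
  set α : ℝ := ex n f with hα
  set V : ℝ := α * (1 - α) with hV
  have hα0 : 0 ≤ α := ex_nonneg fun x => by rcases hf x with h|h <;> rw [h] <;> norm_num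
  have hα1 : α ≤ 1 := by
    rw [hα, ← ex_const (n := n) 1]
    exact ex_mono fun x => by rcases hf x with h|h <;> rw [h] <;> norm_num
  have hV0 : 0 ≤ V := mul_nonneg hα0 (by linarith)
  have hV14 : V ≤ 1/4 := by rw [hV]; nlinarith [sq_nonneg (α - 1/2)]
  -- Parseval facts
  have hff : ex n (fun x => (f x)^2) = α := by
    rw [hα]
    congr 1
    funext x
    rcases hf x with h|h <;> rw [h] <;> norm_num
  have hsumsq : ∑ S : Finset (Fin n), (fh n f S)^2 = α := by rw [parseval_self, hff]
  have hfhempty : fh n f ∅ = α := by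
    rw [hα, fh]
    congr 1
    funext x
    rw [chi, Finset.prod_empty, mul_one]
  have hVsum : ∑ S ∈ Finset.univ.erase ∅, (fh n f S)^2 = V := by
    have h := Finset.add_sum_erase Finset.univ (fun S => (fh n f S)^2) (Finset.mem_univ ∅)
    simp only [hsumsq, hfhempty] at h
    rw [hV]
    nlinarith [h]
  set W : ℝ := ∑ S : Finset (Fin n), (S.card:ℝ) * (fh n f S)^2 with hW
  have hW0 : 0 ≤ W :=
    Finset.sum_nonneg fun S _ => mul_nonneg (by positivity) (sq_nonneg _)
  -- influence via Fourier
  have hInfi : ∀ i : Fin n, Inf n i f = 4 * ∑ S : Finset (Fin n), (if i ∈ S then (fh n f S)^2 else 0) := by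
    intro i
    have h1 : Inf n i f = 4 * ex n (fun x => ((f x - f (flp i x))/2)^2) := by
      rw [Inf]
      rw [show (fun x => ((f x - f (flp i x))/2)^2)
        = fun x => (1/4) * ((f x - f (flp i x))^2) from funext fun x => by ring]
      rw [ex_const_mul]
      ring
    rw [h1, ← parseval_self]
    congr 1
    refine Finset.sum_congr rfl fun S _ => ?_
    rw [fh_dv]
    by_cases hi : i ∈ S
    · rw [if_pos hi, if_pos hi]
    · rw [if_neg hi, if_neg hi]
      norm_num
  have hInfW : ∑ i : Fin n, Inf n i f = 4 * W := by
    have h1 : ∑ i : Fin n, Inf n i f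
        = 4 * ∑ i : Fin n, ∑ S : Finset (Fin n), (if i ∈ S then (fh n f S)^2 else 0) := by
      rw [Finset.mul_sum]
      exact Finset.sum_congr rfl fun i _ => hInfi i
    rw [h1, Finset.sum_comm, hW]
    congr 1
    refine Finset.sum_congr rfl fun S _ => ?_
    rw [Finset.sum_ite_mem, Finset.univ_inter, Finset.sum_const, nsmul_eq_mul]
  -- max influence
  obtain ⟨i₀, _, hmax⟩ := Finset.exists_max_image Finset.univ (fun i => Inf n i f)
    ⟨⟨0, by omega⟩, Finset.mem_univ _⟩
  set τ : ℝ := Inf n i₀ f with hτ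
  have hτ0 : 0 ≤ τ := Inf_nonneg _ _
  refine ⟨i₀, ?_⟩
  -- upper bound on the damped level sum
  have hXle : ∑ S : Finset (Fin n), (S.card:ℝ) * ((1:ℝ)/81)^S.card * (fh n f S)^2
      ≤ Real.sqrt (Real.sqrt τ) * W := by
    have hswap : ∑ S : Finset (Fin n), (S.card:ℝ) * ((1:ℝ)/81)^S.card * (fh n f S)^2
        = ∑ i : Fin n, ∑ S : Finset (Fin n),
            (if i ∈ S then ((1:ℝ)/81)^S.card * (fh n f S)^2 else 0) := by
      rw [Finset.sum_comm]
      refine Finset.sum_congr rfl fun S _ => ?_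
      rw [Finset.sum_ite_mem, Finset.univ_inter, Finset.sum_const, nsmul_eq_mul]
      ring
    rw [hswap]
    calc ∑ i : Fin n, ∑ S : Finset (Fin n),
          (if i ∈ S then ((1:ℝ)/81)^S.card * (fh n f S)^2 else 0)
        ≤ ∑ i : Fin n, Inf n i f * Real.sqrt (Real.sqrt (Inf n i f)) / 4 :=
          Finset.sum_le_sum fun i _ => kkl_step i f hf
      _ ≤ ∑ i : Fin n, Inf n i f * Real.sqrt (Real.sqrt τ) / 4 := by
          refine Finset.sum_le_sum fun i _ => ?_
          have h1 : Real.sqrt (Real.sqrt (Inf n i f)) ≤ Real.sqrt (Real.sqrt τ) :=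
            Real.sqrt_le_sqrt (Real.sqrt_le_sqrt (hmax i (Finset.mem_univ i)))
          have h2 : 0 ≤ Inf n i f := Inf_nonneg _ _
          gcongr
      _ = (∑ i : Fin n, Inf n i f) * Real.sqrt (Real.sqrt τ) / 4 := by
          rw [← Finset.sum_div, ← Finset.sum_mul]
      _ = Real.sqrt (Real.sqrt τ) * W := by rw [hInfW]; ring
  -- tail bound
  have htail : ∑ S ∈ (Finset.univ.erase ∅).filter (fun S => d < S.card), (fh n f S)^2
      ≤ W / (d:ℝ) := by
    rw [le_div_iff₀ hd0, Finset.sum_mul]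
    calc ∑ S ∈ (Finset.univ.erase ∅).filter (fun S => d < S.card), (fh n f S)^2 * (d:ℝ)
        ≤ ∑ S ∈ (Finset.univ.erase ∅).filter (fun S => d < S.card), (S.card:ℝ) * (fh n f S)^2 := by
          refine Finset.sum_le_sum fun S hS => ?_
          have hdS : (d:ℝ) ≤ (S.card:ℝ) := by
            have := (Finset.mem_filter.mp hS).2
            exact_mod_cast le_of_lt this
          nlinarith [sq_nonneg (fh n f S)]
      _ ≤ W := by
          rw [hW]
          refine Finset.sum_le_sum_of_subset_of_nonneg (Finset.filter_subset _ _ |>.trans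
            (Finset.erase_subset _ _)) fun S _ _ => mul_nonneg (by positivity) (sq_nonneg _)
  -- lower bound
  have hlow : ((1:ℝ)/81)^d * (V - W/(d:ℝ))
      ≤ ∑ S : Finset (Fin n), (S.card:ℝ) * ((1:ℝ)/81)^S.card * (fh n f S)^2 := by
    have hsplit : ∑ S ∈ Finset.univ.erase ∅, (fh n f S)^2
        = ∑ S ∈ (Finset.univ.erase ∅).filter (fun S => d < S.card), (fh n f S)^2
          + ∑ S ∈ (Finset.univ.erase ∅).filter (fun S => ¬ d < S.card), (fh n f S)^2 :=
      (Finset.sum_filter_add_sum_filter_not (Finset.univ.erase ∅) (fun S : Finset (Fin n) => d < S.card) _).symm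
    have hstep1 : ((1:ℝ)/81)^d * (V - W/(d:ℝ))
        ≤ ((1:ℝ)/81)^d * ∑ S ∈ (Finset.univ.erase ∅).filter (fun S => ¬ d < S.card), (fh n f S)^2 := by
      refine mul_le_mul_of_nonneg_left ?_ (by positivity)
      have := hsplit
      rw [hVsum] at this
      have h2 : ∑ S ∈ (Finset.univ.erase ∅).filter (fun S => ¬ d < S.card), (fh n f S)^2
          = V - ∑ S ∈ (Finset.univ.erase ∅).filter (fun S => d < S.card), (fh n f S)^2 := by
        linarith
      rw [h2]
      linarith [htail]
    refine hstep1.trans ?_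
    rw [Finset.mul_sum]
    calc ∑ S ∈ (Finset.univ.erase ∅).filter (fun S => ¬ d < S.card), ((1:ℝ)/81)^d * (fh n f S)^2
        ≤ ∑ S ∈ (Finset.univ.erase ∅).filter (fun S => ¬ d < S.card),
            (S.card:ℝ) * ((1:ℝ)/81)^S.card * (fh n f S)^2 := by
          refine Finset.sum_le_sum fun S hS => ?_
          obtain ⟨hS1, hS2'⟩ := Finset.mem_filter.mp hS
          have hS2 : S.card ≤ d := not_lt.mp hS2'
          have hc1 : 1 ≤ S.card := Finset.card_pos.mpr
            (Finset.nonempty_of_ne_empty (Finset.ne_of_mem_erase hS1))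
          have hc1' : (1:ℝ) ≤ (S.card:ℝ) := by exact_mod_cast hc1
          have hpow : ((1:ℝ)/81)^d ≤ ((1:ℝ)/81)^S.card :=
            pow_le_pow_of_le_one (by norm_num) (by norm_num) hS2
          have hpow0 : (0:ℝ) ≤ ((1:ℝ)/81)^S.card := by positivity
          have t1 : ((1:ℝ)/81)^d * (fh n f S)^2 ≤ ((1:ℝ)/81)^S.card * (fh n f S)^2 :=
            mul_le_mul_of_nonneg_right hpow (sq_nonneg _)
          refine t1.trans ?_
          rw [mul_assoc]
          exact le_mul_of_one_le_left (mul_nonneg hpow0 (sq_nonneg _)) hc1'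
      _ ≤ ∑ S : Finset (Fin n), (S.card:ℝ) * ((1:ℝ)/81)^S.card * (fh n f S)^2 := by
          refine Finset.sum_le_sum_of_subset_of_nonneg (Finset.filter_subset _ _ |>.trans
            (Finset.erase_subset _ _)) fun S _ _ => ?_
          have : (0:ℝ) ≤ ((1:ℝ)/81)^S.card := by positivity
          positivity
  -- case analysis
  by_cases hcase : (d:ℝ) * V / 2 ≤ W
  · -- large total influence
    have h1 : 4 * W ≤ (n:ℝ) * τ := by
      rw [← hInfW]
      calc ∑ i : Fin n, Inf n i f ≤ ∑ _i : Fin n, τ :=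
        Finset.sum_le_sum fun i _ => hmax i (Finset.mem_univ i)
      _ = (n:ℝ) * τ := by rw [Finset.sum_const, Finset.card_univ, Fintype.card_fin, nsmul_eq_mul]
    have h2 : V * Real.log n / (22*(n:ℝ)) ≤ 2 * (d:ℝ) * V / (n:ℝ) := by
      rw [div_le_div_iff₀ (by positivity) hn0]
      have h3 : V * Real.log n ≤ V * (44 * (d:ℝ)) := by
        refine mul_le_mul_of_nonneg_left ?_ hV0
        linarith
      nlinarith [hn0]
    refine h2.trans ?_
    rw [div_le_iff₀ hn0]
    nlinarith
  · -- small total influence: use hypercontractivity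
    push_neg at hcase
    have hVpos : 0 < V := by
      by_contra hc
      push_neg at hc
      have : V = 0 := le_antisymm hc hV0
      rw [this] at hcase
      simp at hcase
      linarith
    have hWd : W/(d:ℝ) ≤ V/2 := by
      rw [div_le_iff₀ hd0]
      nlinarith
    have hlow2 : ((1:ℝ)/81)^d * (V/2)
        ≤ ∑ S : Finset (Fin n), (S.card:ℝ) * ((1:ℝ)/81)^S.card * (fh n f S)^2 := by
      refine le_trans ?_ hlow
      refine mul_le_mul_of_nonneg_left ?_ (by positivity)
      linarith
    have hkey : ((1:ℝ)/81)^d * (V/2) ≤ Real.sqrt (Real.sqrt τ) * ((d:ℝ) * V / 2) := by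
      refine (hlow2.trans hXle).trans ?_
      refine mul_le_mul_of_nonneg_left ?_ (Real.sqrt_nonneg _)
      linarith
    have hcd : ((1:ℝ)/81)^d / (d:ℝ) ≤ Real.sqrt (Real.sqrt τ) := by
      rw [div_le_iff₀ hd0]
      have hhalf : (0:ℝ) < V/2 := by linarith
      nlinarith [Real.sqrt_nonneg (Real.sqrt τ)]
    have hτge : (((1:ℝ)/81)^d / (d:ℝ))^4 ≤ τ := by
      have h0 : (0:ℝ) ≤ ((1:ℝ)/81)^d / (d:ℝ) := by positivity
      calc (((1:ℝ)/81)^d / (d:ℝ))^4 = ((((1:ℝ)/81)^d / (d:ℝ))^2)^2 := by ring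
      _ ≤ ((Real.sqrt (Real.sqrt τ))^2)^2 := by
          refine pow_le_pow_left₀ (by positivity) ?_ 2
          exact pow_le_pow_left₀ h0 hcd 2
      _ = (Real.sqrt τ)^2 := by rw [Real.sq_sqrt (Real.sqrt_nonneg _)]
      _ = τ := Real.sq_sqrt hτ0
    calc V * Real.log n / (22*(n:ℝ)) ≤ (1/4) * (Real.log n / (22 * (n:ℝ))) := by
          rw [mul_div_assoc]
          refine mul_le_mul_of_nonneg_right hV14 (by positivity)
      _ = Real.log n / (88 * (n:ℝ)) := by ring
      _ ≤ (((1:ℝ)/81)^d / (d:ℝ))^4 := hE1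
      _ ≤ τ := hτge

/-! ### numeric asymptotics -/

lemma exp_ge_pow6 (x : ℝ) (hx : 0 ≤ x) : x^6/46656 ≤ Real.exp x := by
  have h1 : x/6 ≤ Real.exp (x/6) := by linarith [Real.add_one_le_exp (x/6)]
  have h2 : (x/6)^6 ≤ (Real.exp (x/6))^6 := pow_le_pow_left₀ (by positivity) h1 6
  have h3 : (Real.exp (x/6))^6 = Real.exp x := by
    rw [← Real.exp_nat_mul]
    congr 1
    push_cast
    ring
  rw [h3] at h2
  refine le_trans (le_of_eq ?_) h2
  rw [div_pow]
  norm_num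

lemma exp5_ge : (81:ℝ) ≤ Real.exp 5 := by
  have h : (2.7:ℝ) ≤ Real.exp 1 := by linarith [Real.exp_one_gt_d9]
  calc (81:ℝ) ≤ 2.7^5 := by norm_num
  _ ≤ (Real.exp 1)^5 := pow_le_pow_left₀ (by norm_num) h 5
  _ = Real.exp 5 := by rw [← Real.exp_nat_mul]; norm_num

lemma exp20_le : Real.exp (-20) ≥ (3:ℝ)^(-20 : ℤ) := by
  have h : Real.exp 1 ≤ 3 := by linarith [Real.exp_one_lt_d9]
  have h2 : Real.exp 20 ≤ (3:ℝ)^(20:ℕ) := by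
    calc Real.exp 20 = (Real.exp 1)^(20:ℕ) := by rw [← Real.exp_nat_mul]; norm_num
    _ ≤ (3:ℝ)^(20:ℕ) := pow_le_pow_left₀ (Real.exp_pos 1).le h 20
  rw [ge_iff_le, Real.exp_neg, zpow_neg]
  rw [show ((3:ℝ)^(20:ℤ)) = (3:ℝ)^(20:ℕ) by norm_num]
  exact inv_anti₀ (Real.exp_pos 20) h2

/-- the numeric condition needed by `kkl_fixed` holds once `log n` is huge -/
lemma numeric_cond (n : ℕ) (hL : (10:ℝ)^14 ≤ Real.log n) :
    Real.log n / (88*(n:ℝ)) ≤ (((1:ℝ)/81)^(max 1 ⌈Real.log n/44⌉₊) / ((max 1 ⌈Real.log n/44⌉₊ : ℕ):ℝ))^4 := by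
  set L : ℝ := Real.log n with hLdef
  have hL0 : (0:ℝ) < L := lt_of_lt_of_le (by norm_num) hL
  have hn0 : (0:ℝ) < (n:ℝ) := by
    rcases Nat.eq_zero_or_pos n with h | h
    · exfalso
      rw [h] at hLdef
      norm_num [Real.log_zero] at hLdef
      rw [hLdef] at hL
      norm_num at hL
    · exact_mod_cast h
  have hnL : (n:ℝ) = Real.exp L := (Real.exp_log hn0).symm
  set D : ℕ := max 1 ⌈L/44⌉₊ with hDdef
  have hD1 : (1:ℝ) ≤ (D:ℝ) := by
    have : 1 ≤ D := le_max_left _ _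
    exact_mod_cast this
  have hDeq : D = ⌈L/44⌉₊ := max_eq_right (Nat.one_le_ceil_iff.mpr (by positivity))
  have hDub : (D:ℝ) ≤ L/44 + 1 := by
    rw [hDeq]
    exact le_of_lt (Nat.ceil_lt_add_one (by positivity))
  have hDL : (D:ℝ) ≤ L := by
    have : L/44 + 1 ≤ L := by linarith
    linarith
  have hD0 : (0:ℝ) < (D:ℝ) := by linarith
  -- (1/81)^D ≥ exp(-5D)
  have hpow : Real.exp (-(5*(D:ℝ))) ≤ ((1:ℝ)/81)^D := by
    have h1 : Real.exp (-5) ≤ 1/81 := by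
      rw [Real.exp_neg, one_div]
      exact inv_anti₀ (by norm_num) exp5_ge
    calc Real.exp (-(5*(D:ℝ))) = (Real.exp (-5))^D := by
          rw [← Real.exp_nat_mul]
          congr 1
          ring
    _ ≤ (1/81)^D := pow_le_pow_left₀ (Real.exp_pos _).le h1 D
  -- lower bound of the RHS
  have hRlow : (Real.exp (-(5*(L/44+1)))/L)^4 ≤ (((1:ℝ)/81)^D / (D:ℝ))^4 := by
    refine pow_le_pow_left₀ (by positivity) ?_ 4
    refine div_le_div₀ (by positivity) ?_ hD0 hDL
    refine le_trans ?_ hpow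
    exact Real.exp_le_exp.mpr (by nlinarith)
  refine le_trans ?_ hRlow
  -- main numeric inequality
  rw [div_pow, ← Real.exp_nat_mul]
  rw [div_le_div_iff₀ (by positivity) (by positivity), hnL]
  have hE : Real.exp (((4:ℕ):ℝ) * -(5*(L/44+1))) * Real.exp L = Real.exp ((6/11)*L - 20) := by
    rw [← Real.exp_add]
    congr 1
    push_cast
    ring
  have hgoal2 : Real.exp (((4:ℕ):ℝ) * -(5*(L/44+1))) * (88 * Real.exp L)
      = 88 * Real.exp ((6/11)*L - 20) := by
    rw [← hE]
    ring
  rw [hgoal2]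
  have hx0 : (0:ℝ) ≤ (6/11)*L - 20 := by linarith
  have hexpge : ((6/11)*L - 20)^6/46656 ≤ Real.exp ((6/11)*L - 20) := exp_ge_pow6 _ hx0
  have hhalf : L/2 ≤ (6/11)*L - 20 := by linarith
  have hmono : (L/2)^6 ≤ ((6/11)*L - 20)^6 := pow_le_pow_left₀ (by positivity) hhalf 6
  have hL5 : (0:ℝ) ≤ L^5 := by positivity
  have key : L * L^4 ≤ Real.exp ((6/11)*L - 20) * 88 := by
    have e1 : (L/2)^6 = L * L^5 / 64 := by ring
    have e2 : L * L^4 = L^5 := by ring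
    have hmul : (10:ℝ)^14 * L^5 ≤ L * L^5 := mul_le_mul_of_nonneg_right hL hL5
    nlinarith [hexpge, hmono]
  linarith [key]

/-- Kahn–Kalai–Linial: some coordinate has influence `≳ Var(f) log n / n`. -/
theorem kkl_main : ∃ N₀ : ℕ, ∀ n, N₀ ≤ n → ∀ f : (Fin n → Bool) → ℝ,
    (∀ x, f x = 0 ∨ f x = 1) →
    ∃ i : Fin n, ex n f * (1 - ex n f) * Real.log n / (22*(n:ℝ)) ≤ Inf n i f := by
  refine ⟨⌈Real.exp ((10:ℝ)^14)⌉₊ + 2, fun n hn f hf => ?_⟩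
  have hn2 : 2 ≤ n := le_trans (by omega) hn
  have hL : (10:ℝ)^14 ≤ Real.log n := by
    have h1 : Real.exp ((10:ℝ)^14) ≤ (n:ℝ) := by
      have h2 : ⌈Real.exp ((10:ℝ)^14)⌉₊ ≤ n := by omega
      calc Real.exp ((10:ℝ)^14) ≤ (⌈Real.exp ((10:ℝ)^14)⌉₊ : ℝ) := Nat.le_ceil _
      _ ≤ (n:ℝ) := by exact_mod_cast h2
    calc (10:ℝ)^14 = Real.log (Real.exp ((10:ℝ)^14)) := (Real.log_exp _).symm
    _ ≤ Real.log n := (Real.log_le_log_iff (Real.exp_pos _) (by positivity)).mpr h1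
  have hD1 : 1 ≤ max 1 ⌈Real.log n/44⌉₊ := le_max_left _ _
  have hdlog : Real.log n / 44 ≤ ((max 1 ⌈Real.log n/44⌉₊ : ℕ):ℝ) := by
    calc Real.log n / 44 ≤ (⌈Real.log n/44⌉₊:ℝ) := Nat.le_ceil _
    _ ≤ ((max 1 ⌈Real.log n/44⌉₊ : ℕ):ℝ) := by exact_mod_cast le_max_right 1 _
  exact kkl_fixed n hn2 _ hD1 hdlog (numeric_cond n hL) f hf

/-! ### closure operator along a set of coordinates -/

open scoped Classical in
noncomputable def clF (T : Finset (Fin n)) (R : Finset (Fin n → Bool)) : (Fin n → Bool) → ℝ :=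
  fun x => if ∃ y ∈ R, ∀ i, i ∉ T → x i = y i then 1 else 0

lemma clF_bool (T : Finset (Fin n)) (R : Finset (Fin n → Bool)) (x : Fin n → Bool) :
    clF T R x = 0 ∨ clF T R x = 1 := by
  rw [clF]
  split
  · right; rfl
  · left; rfl

lemma clF_nonneg (T : Finset (Fin n)) (R : Finset (Fin n → Bool)) (x : Fin n → Bool) :
    0 ≤ clF T R x := by rcases clF_bool T R x with h | h <;> rw [h] <;> norm_num

lemma clF_one_iff (T : Finset (Fin n)) (R : Finset (Fin n → Bool)) (x : Fin n → Bool) :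
    clF T R x = 1 ↔ ∃ y ∈ R, ∀ i, i ∉ T → x i = y i := by
  rw [clF]
  split
  · simp_all
  · simp_all

lemma ex_clF_empty (R : Finset (Fin n → Bool)) :
    ex n (clF ∅ R) = (R.card : ℝ) / 2^n := by
  rw [ex]
  congr 1
  have h1 : ∀ x : Fin n → Bool, clF ∅ R x = if x ∈ R then (1:ℝ) else 0 := by
    intro x
    rw [clF]
    have hiff : (∃ y ∈ R, ∀ i, i ∉ (∅ : Finset (Fin n)) → x i = y i) ↔ x ∈ R := by
      constructor
      · rintro ⟨y, hy, hagree⟩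
        have : x = y := funext fun i => hagree i (Finset.notMem_empty i)
        rwa [this]
      · intro hx
        exact ⟨x, hx, fun i _ => rfl⟩
    rw [if_congr hiff rfl rfl]
  rw [Finset.sum_congr rfl fun x _ => h1 x]
  rw [Finset.sum_ite_mem, Finset.univ_inter, Finset.sum_const, nsmul_eq_mul, mul_one]

lemma clF_mono (T T' : Finset (Fin n)) (R : Finset (Fin n → Bool)) (hTT : T ⊆ T')
    (x : Fin n → Bool) : clF T R x ≤ clF T' R x := by
  rcases clF_bool T R x with h | h
  · rw [h]; exact clF_nonneg _ _ _
  · rw [h]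
    obtain ⟨y, hy, hagree⟩ := (clF_one_iff T R x).mp h
    have : clF T' R x = 1 :=
      (clF_one_iff T' R x).mpr ⟨y, hy, fun i hi => hagree i (fun hc => hi (hTT hc))⟩
    rw [this]

lemma clF_flp_mem (T : Finset (Fin n)) (R : Finset (Fin n → Bool)) (i : Fin n) (hi : i ∈ T)
    (x : Fin n → Bool) : clF T R (flp i x) = clF T R x := by
  rw [clF, clF]
  refine if_congr ?_ rfl rfl
  constructor
  · rintro ⟨y, hy, hagree⟩
    refine ⟨y, hy, fun j hj => ?_⟩
    have hji : j ≠ i := fun hc => hj (hc ▸ hi)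
    rw [← flp_apply_ne i j x hji]
    exact hagree j hj
  · rintro ⟨y, hy, hagree⟩
    refine ⟨y, hy, fun j hj => ?_⟩
    have hji : j ≠ i := fun hc => hj (hc ▸ hi)
    rw [flp_apply_ne i j x hji]
    exact hagree j hj

lemma clF_insert (T : Finset (Fin n)) (R : Finset (Fin n → Bool)) (i : Fin n)
    (x : Fin n → Bool) :
    clF (insert i T) R x
      = clF T R x + clF T R (flp i x) - clF T R x * clF T R (flp i x) := by
  have hiff : (∃ y ∈ R, ∀ j, j ∉ insert i T → x j = y j)
      ↔ ((∃ y ∈ R, ∀ j, j ∉ T → x j = y j) ∨ (∃ y ∈ R, ∀ j, j ∉ T → flp i x j = y j)) := by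
    constructor
    · rintro ⟨y, hy, hagree⟩
      by_cases hxy : x i = y i
      · left
        refine ⟨y, hy, fun j hj => ?_⟩
        by_cases hji : j = i
        · rw [hji]; exact hxy
        · exact hagree j (fun hc => by
            rcases Finset.mem_insert.mp hc with h | h
            · exact hji h
            · exact hj h)
      · right
        refine ⟨y, hy, fun j hj => ?_⟩
        by_cases hji : j = i
        · subst hji
          rw [flp_apply_self]
          revert hxy
          cases x j <;> cases y j <;> simp
        · rw [flp_apply_ne i j x hji]
          exact hagree j (fun hc => by
            rcases Finset.mem_insert.mp hc with h | h
            · exact hji h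
            · exact hj h)
    · rintro (⟨y, hy, hagree⟩ | ⟨y, hy, hagree⟩)
      · exact ⟨y, hy, fun j hj => hagree j (fun hc => hj (Finset.mem_insert_of_mem hc))⟩
      · refine ⟨y, hy, fun j hj => ?_⟩
        have hji : j ≠ i := fun hc => hj (hc ▸ Finset.mem_insert_self i T)
        rw [← flp_apply_ne i j x hji]
        exact hagree j (fun hc => hj (Finset.mem_insert_of_mem hc))
  rcases clF_bool T R x with h1 | h1 <;> rcases clF_bool T R (flp i x) with h2 | h2 <;>
    rw [h1, h2] <;> norm_num
  · -- both 0 : insert-clF is 0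
    rw [clF] at h1 h2 ⊢
    rw [if_neg]
    intro hc
    rcases hiff.mp hc with h | h
    · rw [if_pos h] at h1; norm_num at h1
    · rw [if_pos h] at h2; norm_num at h2
  · -- x side 0, flp side 1
    rw [clF] at h2 ⊢
    rw [if_pos]
    apply hiff.mpr
    right
    by_contra hc
    rw [if_neg hc] at h2
    norm_num at h2
  · -- x side 1
    rw [clF] at h1 ⊢
    rw [if_pos]
    apply hiff.mpr
    left
    by_contra hc
    rw [if_neg hc] at h1
    norm_num at h1
  · rw [clF] at h1 ⊢
    rw [if_pos]
    apply hiff.mpr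
    left
    by_contra hc
    rw [if_neg hc] at h1
    norm_num at h1

lemma ex_flp (i : Fin n) (F : (Fin n → Bool) → ℝ) :
    ex n (fun x => F (flp i x)) = ex n F := by
  rw [ex, ex, sum_flp]

lemma ex_sub (f g : (Fin n → Bool) → ℝ) :
    ex n (fun x => f x - g x) = ex n f - ex n g := by
  rw [ex, ex, ex, Finset.sum_sub_distrib, sub_div]

lemma ex_clF_insert (T : Finset (Fin n)) (R : Finset (Fin n → Bool)) (i : Fin n) :
    ex n (clF (insert i T) R) = ex n (clF T R) + Inf n i (clF T R) / 2 := by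
  set A := clF T R with hA
  have h1 : ex n (clF (insert i T) R)
      = ex n A + (ex n (fun x => A (flp i x)) - ex n (fun x => A x * A (flp i x))) := by
    rw [← ex_sub, ← ex_add]
    congr 1
    funext x
    rw [clF_insert]
    ring
  have h2 : Inf n i A = ex n A + (ex n (fun x => A (flp i x))
      - 2 * ex n (fun x => A x * A (flp i x))) := by
    rw [Inf, ← ex_const_mul, ← ex_sub, ← ex_add]
    congr 1
    funext x
    rcases clF_bool T R x with hx | hx <;> rcases clF_bool T R (flp i x) with hy | hy <;>
      rw [← hA] at hx hy <;> rw [hx, hy] <;> norm_num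
  rw [ex_flp] at h1 h2
  linarith

/-! ### cardinality of the closure via the projection image -/

lemma card_clF (S : Finset (Fin n)) (R : Finset (Fin n → Bool)) :
    (2:ℝ)^n * ex n (clF S R)
      = ((R.image (fun x (i : {i : Fin n // i ∉ S}) => x i.1)).card : ℝ) * 2^S.card := by
  classical
  set res : (Fin n → Bool) → ({i : Fin n // i ∉ S} → Bool) :=
    fun x (i : {i : Fin n // i ∉ S}) => x i.1 with hres
  set I := R.image res with hI
  have h0 : (2:ℝ)^n * ex n (clF S R) = ∑ x, clF S R x := by
    rw [ex]
    field_simp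
  rw [h0]
  have h1 : ∀ x : Fin n → Bool, clF S R x = if res x ∈ I then (1:ℝ) else 0 := by
    intro x
    rw [clF]
    refine if_congr ?_ rfl rfl
    rw [hI, Finset.mem_image]
    constructor
    · rintro ⟨y, hy, hagree⟩
      exact ⟨y, hy, funext fun i => (hagree i.1 i.2).symm⟩
    · rintro ⟨y, hy, heq⟩
      refine ⟨y, hy, fun i hi => ?_⟩
      have := congrFun heq ⟨i, hi⟩
      exact this.symm
  rw [Finset.sum_congr rfl fun x _ => h1 x, Finset.sum_boole]
  have h2 : (Finset.univ.filter (fun x => res x ∈ I)).card = I.card * 2^S.card := by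
    rw [Finset.card_eq_sum_card_fiberwise (f := res) (t := I)
      (s := Finset.univ.filter (fun x => res x ∈ I))
      (fun x hx => Finset.mem_coe.mpr (Finset.mem_filter.mp (Finset.mem_coe.mp hx)).2)]
    have hfib : ∀ z ∈ I, ((Finset.univ.filter (fun x => res x ∈ I)).filter
        (fun x => res x = z)).card = 2^S.card := by
      intro z hz
      have he : (Finset.univ.filter (fun x => res x ∈ I)).filter (fun x => res x = z)
          = Finset.univ.filter (fun x => res x = z) := by
        ext a
        simp only [Finset.mem_filter, Finset.mem_univ, true_and]
        constructor
        · rintro ⟨_, h⟩; exact h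
        · intro h; exact ⟨h ▸ hz, h⟩
      rw [he]
      -- biject with functions on S
      have hbij : (Finset.univ.filter (fun x => res x = z)).card
          = (Finset.univ : Finset ({i : Fin n // i ∈ S} → Bool)).card := by
        refine Finset.card_bij' (fun x _ => fun (i : {i : Fin n // i ∈ S}) => x i.1)
          (fun w _ => fun (i : Fin n) => if h : i ∈ S then w ⟨i, h⟩ else z ⟨i, h⟩)
          ?_ ?_ ?_ ?_
        · intro a ha
          exact Finset.mem_univ _
        · intro w _
          refine Finset.mem_filter.mpr ⟨Finset.mem_univ _, ?_⟩
          funext i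
          rw [hres]
          simp only
          rw [dif_neg i.2]
        · intro a ha
          funext i
          by_cases hiS : i ∈ S
          · simp only [dif_pos hiS]
          · simp only [dif_neg hiS]
            have := (Finset.mem_filter.mp ha).2
            have h3 := congrFun this ⟨i, hiS⟩
            exact h3.symm
        · intro w _
          funext i
          simp only [dif_pos i.2]
      rw [hbij, Finset.card_univ, Fintype.card_fun]
      simp [Fintype.card_coe]
    rw [Finset.sum_congr rfl hfib, Finset.sum_const, smul_eq_mul]
  rw [h2]
  push_cast
  ring

/-! ### the greedy projection iteration -/

lemma greedy (n : ℕ) (hn2 : 2 ≤ n)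
    (hkkl : ∀ f : (Fin n → Bool) → ℝ, (∀ x, f x = 0 ∨ f x = 1) →
      ∃ i, ex n f * (1 - ex n f) * Real.log n / (22*(n:ℝ)) ≤ Inf n i f)
    (R : Finset (Fin n → Bool)) (δ : ℝ) (hδ0 : 0 < δ) (hδ1 : δ < 1)
    (k : ℕ) (hk : k ≤ n)
    (hyp : ∀ S : Finset (Fin n), S.card = k → ex n (clF S R) ≤ 1 - δ)
    (hα : 0 < (R.card:ℝ)/2^n)
    (ε : ℝ) (hε0 : 0 ≤ ε) (hεle : ε ≤ δ * Real.log n / (44*(n:ℝ))) :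
    ∀ t, t ≤ k → ∃ T : Finset (Fin n), T.card = t
      ∧ (1+ε)^t * ((R.card:ℝ)/2^n) ≤ ex n (clF T R) := by
  have hn0 : (0:ℝ) < (n:ℝ) := by
    have : (0:ℕ) < n := by omega
    exact_mod_cast this
  have hlogpos : 0 < Real.log n := Real.log_pos (by exact_mod_cast hn2)
  intro t
  induction t with
  | zero =>
    intro _
    refine ⟨∅, Finset.card_empty, ?_⟩
    rw [ex_clF_empty, pow_zero, one_mul]
  | succ t ih =>
    intro ht
    obtain ⟨T, hTcard, hTlb⟩ := ih (le_trans (Nat.le_succ t) ht)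
    set A := clF T R with hA
    set β := ex n A with hβ
    have hβub : β ≤ 1 - δ := by
      obtain ⟨T', hTT', hT'card⟩ := Finset.exists_superset_card_eq
        (n := k) (by rw [hTcard]; omega) (by rw [Fintype.card_fin]; exact hk)
      calc β ≤ ex n (clF T' R) := ex_mono (clF_mono T T' R hTT')
      _ ≤ 1 - δ := hyp T' hT'card
    have hβpos : 0 < β := by
      refine lt_of_lt_of_le ?_ hTlb
      have h1 : (0:ℝ) < (1+ε)^t := by positivity
      positivity
    obtain ⟨i, hi⟩ := hkkl A (clF_bool T R)
    have hlb2 : β * δ * Real.log n / (22*(n:ℝ)) ≤ Inf n i A := by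
      refine le_trans ?_ hi
      rw [← hβ]
      have h1 : β * δ ≤ β * (1 - β) :=
        mul_le_mul_of_nonneg_left (by linarith) hβpos.le
      have h2 : (0:ℝ) ≤ 22*(n:ℝ) := by positivity
      apply div_le_div_of_nonneg_right ?_ h2
      exact mul_le_mul_of_nonneg_right h1 hlogpos.le
    have hInfpos : 0 < Inf n i A := by
      refine lt_of_lt_of_le ?_ hlb2
      positivity
    have hiT : i ∉ T := by
      intro hc
      have hzero : Inf n i A = 0 := by
        rw [Inf]
        rw [show (fun x => (A x - A (flp i x))^2) = fun _ => (0:ℝ) from funext fun x => by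
          rw [hA, clF_flp_mem T R i hc x]; ring]
        exact ex_const 0
      rw [hzero] at hInfpos
      exact lt_irrefl _ hInfpos
    refine ⟨insert i T, by rw [Finset.card_insert_of_notMem hiT, hTcard], ?_⟩
    have hstep : ex n (clF (insert i T) R) = β + Inf n i A / 2 := by
      rw [ex_clF_insert, ← hA, ← hβ]
    rw [hstep]
    have hεβ : ε * β ≤ Inf n i A / 2 := by
      have h1 : ε * β ≤ (δ * Real.log n / (44*(n:ℝ))) * β :=
        mul_le_mul_of_nonneg_right hεle hβpos.le
      refine h1.trans ?_
      have heq : δ * Real.log n / (44*(n:ℝ)) * β = (β * δ * Real.log n / (22*(n:ℝ)))/2 := by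
        ring
      rw [heq]
      linarith
    calc (1+ε)^(t+1) * ((R.card:ℝ)/2^n)
        = (1+ε) * ((1+ε)^t * ((R.card:ℝ)/2^n)) := by ring
      _ ≤ (1+ε) * β := mul_le_mul_of_nonneg_left hTlb (by linarith)
      _ = β + ε * β := by ring
      _ ≤ β + Inf n i A / 2 := by linarith
end
end KKLaux

open Finset

/-- KKL corollary: if every projection of `R ⊆ {0,1}^n` onto the complement of a
`⌈σn⌉`-size index set has relative size at most `1-δ`, then `R` has relative size at
most `n^{-c}`. -/
theorem stmt_0 (σ δ : ℝ) (hσ : σ ∈ Set.Ioo (0:ℝ) 1) (hδ : δ ∈ Set.Ioo (0:ℝ) 1) :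
    ∃ c : ℝ, 0 < c ∧ ∃ N : ℕ, ∀ n : ℕ, N ≤ n →
      ∀ R : Finset (Fin n → Bool),
        (∀ S : Finset (Fin n), S.card = ⌈σ * n⌉₊ →
          ((R.image (fun x (i : {i : Fin n // i ∉ S}) => x i.1)).card : ℝ)
            ≤ (1 - δ) * 2 ^ (n - S.card)) →
        (R.card : ℝ) ≤ (n : ℝ) ^ (-c) * 2 ^ n := by
  obtain ⟨hσ0, hσ1⟩ := hσ
  obtain ⟨hδ0, hδ1⟩ := hδ
  obtain ⟨N₀, hkkl⟩ := KKLaux.kkl_main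
  refine ⟨σ*δ/88, div_pos (mul_pos hσ0 hδ0) (by norm_num), max N₀ 2,
    fun n hn R hyp => ?_⟩
  have hn2 : 2 ≤ n := le_trans (le_max_right _ _) hn
  have hnN : N₀ ≤ n := le_trans (le_max_left _ _) hn
  have hn0 : (0:ℝ) < (n:ℝ) := by
    have : (0:ℕ) < n := by omega
    exact_mod_cast this
  have hlogpos : 0 < Real.log n := Real.log_pos (by exact_mod_cast hn2)
  have hRHS0 : (0:ℝ) ≤ (n:ℝ)^(-(σ*δ/88)) * 2^n := by positivity
  rcases eq_or_ne R ∅ with hR | hR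
  · rw [hR]
    simpa using hRHS0
  have hα : 0 < ((R.card:ℝ))/2^n := by
    have hc : 0 < R.card := Finset.card_pos.mpr (Finset.nonempty_of_ne_empty hR)
    have hc' : (0:ℝ) < (R.card:ℝ) := by exact_mod_cast hc
    positivity
  set k := ⌈σ * (n:ℝ)⌉₊ with hkdef
  have hk : k ≤ n := by
    rw [hkdef]
    refine Nat.ceil_le.mpr ?_
    calc σ * (n:ℝ) ≤ 1 * (n:ℝ) := mul_le_mul_of_nonneg_right hσ1.le hn0.le
    _ = (n:ℝ) := one_mul _
  have hypex : ∀ S : Finset (Fin n), S.card = k → KKLaux.ex n (KKLaux.clF S R) ≤ 1 - δ := by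
    intro S hS
    have h := hyp S hS
    have hcount := KKLaux.card_clF S R
    have h2 : (2:ℝ)^n * KKLaux.ex n (KKLaux.clF S R)
        ≤ ((1 - δ) * 2 ^ (n - S.card)) * 2^S.card := by
      rw [hcount]
      exact mul_le_mul_of_nonneg_right h (by positivity)
    have hScard : S.card ≤ n := by rw [hS]; exact hk
    have h3 : ((2:ℝ) ^ (n - S.card)) * 2^S.card = 2^n := by
      rw [← pow_add]
      congr 1
      omega
    rw [mul_assoc, h3] at h2
    have h4 : (2:ℝ)^n * KKLaux.ex n (KKLaux.clF S R) ≤ (2:ℝ)^n * (1-δ) := by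
      calc (2:ℝ)^n * KKLaux.ex n (KKLaux.clF S R) ≤ (1-δ) * 2^n := h2
      _ = (2:ℝ)^n * (1-δ) := by ring
    exact le_of_mul_le_mul_left h4 (by positivity)
  set ε := δ * Real.log n / (44*(n:ℝ)) with hεdef
  have hε0 : 0 ≤ ε := by positivity
  obtain ⟨T, hTcard, hTlb⟩ := KKLaux.greedy n hn2 (hkkl n hnN) R δ hδ0 hδ1 k hk hypex hα
    ε hε0 hεdef.le k le_rfl
  have hfinal : KKLaux.ex n (KKLaux.clF T R) ≤ 1 - δ := hypex T hTcard
  have hchain : (1+ε)^k * ((R.card:ℝ)/2^n) ≤ 1 := by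
    refine le_trans (hTlb.trans hfinal) ?_
    linarith
  have hεle1 : ε ≤ 1 := by
    have hlogle : Real.log n ≤ (n:ℝ) := by
      have := Real.log_le_sub_one_of_pos hn0
      linarith
    rw [hεdef, div_le_one (by positivity)]
    nlinarith
  have hexpε : Real.exp (ε/2) ≤ 1 + ε := by
    have hprod : Real.exp (ε/2) * Real.exp (-(ε/2)) = 1 := by
      rw [← Real.exp_add]
      norm_num
    have h2' : 1 - ε/2 ≤ Real.exp (-(ε/2)) := by
      linarith [Real.add_one_le_exp (-(ε/2))]
    have h3' : Real.exp (ε/2) * (1 - ε/2) ≤ 1 := by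
      have := mul_le_mul_of_nonneg_left h2' (Real.exp_pos (ε/2)).le
      rw [hprod] at this
      linarith
    nlinarith [Real.exp_pos (ε/2)]
  have hpow : Real.exp ((k:ℝ)*ε/2) ≤ (1+ε)^k := by
    have he : Real.exp ((k:ℝ)*ε/2) = (Real.exp (ε/2))^k := by
      rw [← Real.exp_nat_mul]
      congr 1
      ring
    rw [he]
    exact pow_le_pow_left₀ (Real.exp_pos _).le hexpε k
  have hαle : (R.card:ℝ)/2^n ≤ Real.exp (-((k:ℝ)*ε/2)) := by
    have hEpos : 0 < Real.exp ((k:ℝ)*ε/2) := Real.exp_pos _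
    have h5 : Real.exp ((k:ℝ)*ε/2) * ((R.card:ℝ)/2^n) ≤ 1 :=
      le_trans (mul_le_mul_of_nonneg_right hpow hα.le) hchain
    rw [Real.exp_neg]
    have h6 := mul_le_mul_of_nonneg_left h5 (inv_nonneg.mpr hEpos.le)
    rw [← mul_assoc, inv_mul_cancel₀ hEpos.ne', one_mul, mul_one] at h6
    exact h6
  have hkσ : σ * (n:ℝ) ≤ (k:ℝ) := by
    rw [hkdef]
    exact Nat.le_ceil _
  have hexp2 : σ*δ/88 * Real.log n ≤ (k:ℝ)*ε/2 := by
    have h6 : σ*(n:ℝ)*ε ≤ (k:ℝ)*ε := mul_le_mul_of_nonneg_right hkσ hε0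
    have h7 : σ*(n:ℝ)*ε = σ*δ*Real.log n/44 := by
      rw [hεdef]
      field_simp
    linarith
  have hmain : (R.card:ℝ)/2^n ≤ (n:ℝ)^(-(σ*δ/88)) := by
    refine hαle.trans ?_
    rw [Real.rpow_def_of_pos hn0]
    apply Real.exp_le_exp.mpr
    have : Real.log n * -(σ*δ/88) = -(σ*δ/88 * Real.log n) := by ring
    rw [this]
    linarith
  calc (R.card:ℝ) = ((R.card:ℝ)/2^n) * 2^n := by field_simp
  _ ≤ (n:ℝ)^(-(σ*δ/88)) * 2^n := mul_le_mul_of_nonneg_right hmain (by positivity)
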